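/- Levinson recursion step: let M^{N+1} be an (N+1)×(N+1) Hermitian positive definite Toeplitz matrix with entries M(k−l), and let p^N, q^N ∈ ℂ^N solve M^N p^N = e_0 and M^N q^N = e_{N−1} for the N×N leading principal submatrix M^N. Then there exists a scalar σ ∈ ℂ such that the vector p' := (p^N/p^N_0, 0)ᵀ + σ (0, q^N/q^N_{N−1})ᵀ satisfies M^{N+1} p' = c e_0 for some c ∈ ℂ, c ≠ 0. -/

import Mathlib

open scoped ComplexOrder
open Matrix Finset

lemma aux_quad (N : ℕ) (M : ℤ → ℂ)
    (hpos : (Matrix.of fun k l : Fin (N + 1) => M ((k : ℤ) - (l : ℤ))).PosDef)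
    (x : Fin N → ℂ) (hx : x ≠ 0) :
    0 < star x ⬝ᵥ (Matrix.of fun k l : Fin N => M ((k : ℤ) - (l : ℤ))).mulVec x := by
  have hy : (Fin.snoc x 0 : Fin (N+1) → ℂ) ≠ 0 := by
    intro h
    apply hx
    funext j
    have := congrFun h (Fin.castSucc j)
    simpa using this
  have h2 := hpos.dotProduct_mulVec_pos hy
  have heq : star (Fin.snoc x 0 : Fin (N+1) → ℂ) ⬝ᵥ
      (Matrix.of fun k l : Fin (N + 1) => M ((k : ℤ) - (l : ℤ))).mulVec (Fin.snoc x 0)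
      = star x ⬝ᵥ (Matrix.of fun k l : Fin N => M ((k : ℤ) - (l : ℤ))).mulVec x := by
    simp [dotProduct, Matrix.mulVec, Fin.sum_univ_castSucc]
  rwa [heq] at h2

set_option maxHeartbeats 1000000 in
theorem stmt9 (N : ℕ) (hN : 0 < N) (M : ℤ → ℂ)
    (hherm : ∀ l : ℤ, M (-l) = star (M l))
    (hpos : (Matrix.of fun k l : Fin (N + 1) => M ((k : ℤ) - (l : ℤ))).PosDef)
    (p q : Fin N → ℂ)
    (hp : (Matrix.of fun k l : Fin N => M ((k : ℤ) - (l : ℤ))).mulVec p =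
      Pi.single ⟨0, hN⟩ 1)
    (hq : (Matrix.of fun k l : Fin N => M ((k : ℤ) - (l : ℤ))).mulVec q =
      Pi.single ⟨N - 1, by omega⟩ 1) :
    ∃ σ c : ℂ, c ≠ 0 ∧
      (Matrix.of fun k l : Fin (N + 1) => M ((k : ℤ) - (l : ℤ))).mulVec
        ((Fin.snoc (fun i => p i / p ⟨0, hN⟩) 0 : Fin (N + 1) → ℂ) +
          σ • (Fin.cons 0 (fun i => q i / q ⟨N - 1, by omega⟩) : Fin (N + 1) → ℂ)) =
      c • (Pi.single (0 : Fin (N + 1)) 1 : Fin (N + 1) → ℂ) := by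
  set e0 : Fin N := ⟨0, hN⟩ with he0
  set en : Fin N := ⟨N - 1, by omega⟩ with hen
  -- p ≠ 0, q ≠ 0
  have hp0 : p ≠ 0 := by
    intro h
    have := congrFun hp e0
    rw [h] at this
    simp [Matrix.mulVec_zero] at this
  have hq0 : q ≠ 0 := by
    intro h
    have := congrFun hq en
    rw [h] at this
    simp [Matrix.mulVec_zero] at this
  -- first entries are nonzero
  have hpe : p e0 ≠ 0 := by
    have h1 := aux_quad N M hpos p hp0
    rw [hp] at h1
    have h2 : star p ⬝ᵥ (Pi.single e0 1 : Fin N → ℂ) = star (p e0) := by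
      simp [dotProduct, Pi.single_apply]
    rw [h2] at h1
    intro h
    rw [h] at h1
    simp at h1
  have hqe : q en ≠ 0 := by
    have h1 := aux_quad N M hpos q hq0
    rw [hq] at h1
    have h2 : star q ⬝ᵥ (Pi.single en 1 : Fin N → ℂ) = star (q en) := by
      simp [dotProduct, Pi.single_apply]
    rw [h2] at h1
    intro h
    rw [h] at h1
    simp at h1
  set α : ℂ := ∑ l : Fin N, M ((N : ℤ) - (l : ℤ)) * (p l / p e0) with hα
  set β : ℂ := ∑ l : Fin N, M (-1 - (l : ℤ)) * (q l / q en) with hβ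
  set σ : ℂ := -(α * q en) with hσ
  set c : ℂ := 1 / p e0 + σ * β with hc
  set v : Fin (N+1) → ℂ := (Fin.snoc (fun i => p i / p e0) 0 : Fin (N + 1) → ℂ) +
      σ • (Fin.cons 0 (fun i => q i / q en) : Fin (N + 1) → ℂ) with hv
  have hmain : (Matrix.of fun k l : Fin (N + 1) => M ((k : ℤ) - (l : ℤ))).mulVec v =
      c • (Pi.single (0 : Fin (N + 1)) 1 : Fin (N + 1) → ℂ) := by
    funext k
    have hp' : ∀ i : Fin N, ∑ j : Fin N, M ((i : ℤ) - (j : ℤ)) * p j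
        = (Pi.single e0 1 : Fin N → ℂ) i :=
      fun i => by simpa [Matrix.mulVec, dotProduct] using congrFun hp i
    have hq' : ∀ i : Fin N, ∑ j : Fin N, M ((i : ℤ) - (j : ℤ)) * q j
        = (Pi.single en 1 : Fin N → ℂ) i :=
      fun i => by simpa [Matrix.mulVec, dotProduct] using congrFun hq i
    have hSP : ∀ k : Fin (N+1), ∑ j : Fin N, M ((k : ℤ) - (j : ℤ)) * (p j / p e0)
        = if h : (k : ℕ) < N then (Pi.single e0 1 : Fin N → ℂ) ⟨k, h⟩ / p e0 else α := by
      intro k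
      by_cases h : (k : ℕ) < N
      · rw [dif_pos h, ← hp' ⟨k, h⟩, Finset.sum_div]
        exact Finset.sum_congr rfl fun j _ => by rw [mul_div_assoc]
      · have : (k : ℕ) = N := by omega
        rw [dif_neg h, hα]
        exact Finset.sum_congr rfl fun j _ => by rw [this]
    have hSQ : ∀ k : Fin (N+1), ((k:ℕ) ≠ 0) → ∀ h : (k : ℕ) - 1 < N,
        ∑ j : Fin N, M ((k : ℤ) - ((j : ℤ) + 1)) * (q j / q en)
        = (Pi.single en 1 : Fin N → ℂ) ⟨(k:ℕ) - 1, h⟩ / q en := by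
      intro k hk h
      rw [← hq' ⟨(k:ℕ) - 1, h⟩, Finset.sum_div]
      refine Finset.sum_congr rfl fun j _ => ?_
      rw [mul_div_assoc]
      congr 2
      have : ((⟨(k:ℕ) - 1, h⟩ : Fin N) : ℤ) = (k : ℤ) - 1 := by
        simp only [Fin.val_mk]
        omega
      rw [this]; ring
    -- expand mulVec pointwise
    have hexp : (Matrix.of fun k l : Fin (N + 1) => M ((k : ℤ) - (l : ℤ))).mulVec
        ((Fin.snoc (fun i => p i / p e0) 0 : Fin (N + 1) → ℂ) +
          σ • (Fin.cons 0 (fun i => q i / q en) : Fin (N + 1) → ℂ)) k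
        = (∑ j : Fin N, M ((k : ℤ) - (j : ℤ)) * (p j / p e0))
          + σ * ∑ j : Fin N, M ((k : ℤ) - ((j : ℤ) + 1)) * (q j / q en) := by
      simp only [Matrix.mulVec, dotProduct, Pi.add_apply, Pi.smul_apply, smul_eq_mul,
        Matrix.of_apply, mul_add, Finset.sum_add_distrib]
      congr 1
      · rw [Fin.sum_univ_castSucc]
        simp [Fin.snoc_castSucc]
      · rw [Fin.sum_univ_succ, Finset.mul_sum]
        simp only [Fin.cons_zero, Fin.cons_succ, mul_zero, zero_add]
        refine Finset.sum_congr rfl fun j _ => ?_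
        have : ((Fin.succ j : Fin (N+1)) : ℤ) = (j : ℤ) + 1 := by
          simp [Fin.val_succ]
        rw [this]; ring
    rw [hexp]
    rcases Nat.eq_zero_or_pos (k : ℕ) with hk0 | hkpos
    · -- k = 0 : value is c
      have hk : k = 0 := Fin.ext hk0
      subst hk
      have h1 := hSP 0
      rw [dif_pos (by simpa using hN)] at h1
      have : (⟨((0 : Fin (N+1)) : ℕ), by simpa using hN⟩ : Fin N) = e0 := by
        apply Fin.ext; simp [he0]
      rw [this, Pi.single_eq_same] at h1
      have h2 : ∑ j : Fin N, M (((0 : Fin (N+1)) : ℤ) - ((j : ℤ) + 1)) * (q j / q en) = β := by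
        rw [hβ]
        refine Finset.sum_congr rfl fun j _ => ?_
        congr 2
        simp; ring
      rw [h1, h2]
      simp [hc]
    · -- k ≠ 0
      have hkne : k ≠ 0 := by intro h; rw [h] at hkpos; simp at hkpos
      have hkm : (k : ℕ) - 1 < N := by have := k.isLt; omega
      have h2 := hSQ k (by omega) hkm
      rcases Nat.lt_or_ge (k : ℕ) N with hkN | hkN
      · -- middle rows: both single values are zero
        have h1 := hSP k
        rw [dif_pos hkN] at h1
        have hz1 : (Pi.single e0 1 : Fin N → ℂ) ⟨(k:ℕ), hkN⟩ = 0 := by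
          apply Pi.single_eq_of_ne
          intro h
          have := congrArg Fin.val h
          simp [he0] at this
          omega
        have hz2 : (Pi.single en 1 : Fin N → ℂ) ⟨(k:ℕ) - 1, hkm⟩ = 0 := by
          apply Pi.single_eq_of_ne
          intro h
          have := congrArg Fin.val h
          simp [hen] at this
          omega
        rw [h1, h2, hz1, hz2]
        simp [Pi.single_apply, hkne]
      · -- last row k = N : α + σ/q en = 0
        have hkN' : (k : ℕ) = N := by have := k.isLt; omega
        have h1 := hSP k
        rw [dif_neg (by omega)] at h1
        have hz2 : (⟨(k:ℕ) - 1, hkm⟩ : Fin N) = en := by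
          apply Fin.ext; simp [hen]; omega
        rw [hz2, Pi.single_eq_same] at h2
        rw [h1, h2]
        have hz : (c • (Pi.single (0 : Fin (N+1)) 1 : Fin (N + 1) → ℂ)) k = 0 := by
          simp [Pi.single_apply, hkne]
        rw [hz, hσ]
        field_simp
        ring
  have hv0 : v 0 = 1 := by
    have h0 : (0 : Fin (N+1)) = Fin.castSucc e0 := by
      apply Fin.ext; simp [he0]
    rw [hv]
    simp only [Pi.add_apply, Pi.smul_apply, smul_eq_mul, h0, Fin.snoc_castSucc]
    rw [show Fin.castSucc e0 = (0 : Fin (N+1)) from h0.symm]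
    simp [Fin.cons_zero, div_self hpe]
  have hvne : v ≠ 0 := by
    intro h
    rw [h] at hv0
    simp at hv0
  have hcpos := hpos.dotProduct_mulVec_pos hvne
  rw [hmain] at hcpos
  have hdot : star v ⬝ᵥ (c • (Pi.single (0 : Fin (N + 1)) 1 : Fin (N + 1) → ℂ))
      = star (v 0) * c := by
    rw [dotProduct_smul, dotProduct_single, Pi.star_apply, mul_one,
      smul_eq_mul, mul_comm]
  rw [hdot, hv0] at hcpos
  simp only [star_one, one_mul] at hcpos
  exact ⟨σ, c, ne_of_gt hcpos, hmain⟩
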